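/- In NSym, the noncommutative determinant Det(H_{j-i+1})_{1≤i,j≤n} expands as ∑_{α ⊨ n} (-1)^{n + l(α)} H_α: the nonzero products in the determinant expansion are in sign-preserving bijection with compositions of n. -/

import Mathlib

open Equiv List

namespace Det12

variable {N : Type} [Ring N]

/-- matrix entry, as a function of natural indices -/
def ent (Hh : ℕ → N) (i v : ℕ) : N := if i ≤ v + 1 then Hh (v + 1 - i) else 0

def D (Hh : ℕ → N) (n : ℕ) : N :=
  ∑ σ : Equiv.Perm (Fin n), ((Equiv.Perm.sign σ : ℤˣ) : ℤ) •
      ((List.finRange n).map (fun (i : Fin n) =>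
        if (i : ℕ) ≤ (σ i : ℕ) + 1 then Hh ((σ i : ℕ) + 1 - (i : ℕ)) else 0)).prod

def R (Hh : ℕ → N) (n : ℕ) : N :=
  ∑ α : Composition n, ((-1 : ℤ) ^ (n + α.length)) • (α.blocks.map Hh).prod

theorem D_eq (Hh : ℕ → N) (n : ℕ) :
    D Hh n = ∑ σ : Equiv.Perm (Fin n), ((Equiv.Perm.sign σ : ℤˣ) : ℤ) •
      ((List.finRange n).map (fun (i : Fin n) => ent Hh (i : ℕ) ((σ i : ℕ)))).prod := rfl

/-! ### the embedding -/

variable {j m n : ℕ}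

def E (h : j + 1 + m = n) : (Fin (j + 1) ⊕ Fin m) ≃ Fin n :=
  finSumFinEquiv.trans (finCongr h)

def emb (h : j + 1 + m = n) (τ : Equiv.Perm (Fin m)) : Equiv.Perm (Fin n) :=
  (E h).permCongr (Equiv.sumCongr (Fin.cycleRange (Fin.last j))⁻¹ τ)

lemma E_symm_of_lt (h : j + 1 + m = n) (i : Fin n) (hi : (i : ℕ) < j + 1) :
    (E h).symm i = Sum.inl ⟨(i : ℕ), hi⟩ := by
  rw [Equiv.symm_apply_eq]; ext; simp [E]

lemma E_symm_of_ge (h : j + 1 + m = n) (i : Fin n) (hi : j + 1 ≤ (i : ℕ)) :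
    (E h).symm i = Sum.inr ⟨(i : ℕ) - (j + 1), by omega⟩ := by
  have hin : (i : ℕ) < n := i.isLt
  rw [Equiv.symm_apply_eq]; ext; simp [E]; omega

lemma emb_val_zero (h : j + 1 + m = n) (τ : Equiv.Perm (Fin m)) (i : Fin n)
    (hi : (i : ℕ) = 0) : ((emb h τ i : Fin n) : ℕ) = j := by
  have h1 : (i : ℕ) < j + 1 := by omega
  have h2 : (⟨(i : ℕ), h1⟩ : Fin (j + 1)) = 0 := by ext; simp [hi]
  rw [emb, Equiv.permCongr_apply, E_symm_of_lt h i h1, h2]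
  simp only [Equiv.sumCongr_apply, Sum.map_inl]
  have h3 : ((Fin.cycleRange (Fin.last j))⁻¹ : Equiv.Perm (Fin (j+1))) 0 = Fin.last j := by
    rw [Equiv.Perm.inv_def, Fin.cycleRange_symm_zero]
  rw [h3]; simp [E]

lemma emb_val_mid (h : j + 1 + m = n) (τ : Equiv.Perm (Fin m)) (i : Fin n)
    (hi0 : 1 ≤ (i : ℕ)) (hij : (i : ℕ) ≤ j) :
    ((emb h τ i : Fin n) : ℕ) = (i : ℕ) - 1 := by
  have h1 : (i : ℕ) < j + 1 := by omega
  have h2 : (⟨(i : ℕ), h1⟩ : Fin (j + 1)) = Fin.succ ⟨(i : ℕ) - 1, by omega⟩ := by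
    ext; simp; omega
  rw [emb, Equiv.permCongr_apply, E_symm_of_lt h i h1, h2]
  simp only [Equiv.sumCongr_apply, Sum.map_inl]
  have h3 : ((Fin.cycleRange (Fin.last j))⁻¹ : Equiv.Perm (Fin (j+1)))
      (Fin.succ ⟨(i : ℕ) - 1, by omega⟩) = Fin.castSucc ⟨(i : ℕ) - 1, by omega⟩ := by
    rw [Equiv.Perm.inv_def, Fin.cycleRange_symm_succ, Fin.succAbove_last]
  rw [h3]; simp [E]

lemma emb_val_high (h : j + 1 + m = n) (τ : Equiv.Perm (Fin m)) (i : Fin n)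
    (hij : j + 1 ≤ (i : ℕ)) :
    ((emb h τ i : Fin n) : ℕ) = (j + 1) + (τ ⟨(i : ℕ) - (j + 1), by omega⟩ : ℕ) := by
  rw [emb, Equiv.permCongr_apply, E_symm_of_ge h i hij]
  simp [E]

lemma sign_emb (h : j + 1 + m = n) (τ : Equiv.Perm (Fin m)) :
    Equiv.Perm.sign (emb h τ) = (-1) ^ j * Equiv.Perm.sign τ := by
  rw [emb, Equiv.Perm.sign_permCongr, Equiv.Perm.sign_sumCongr]
  simp

lemma emb_injective (h : j + 1 + m = n) : Function.Injective (emb h) := by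
  intro τ τ' he
  have h2 : Equiv.sumCongr ((Fin.cycleRange (Fin.last j))⁻¹ : Equiv.Perm (Fin (j+1))) τ =
      Equiv.sumCongr ((Fin.cycleRange (Fin.last j))⁻¹ : Equiv.Perm (Fin (j+1))) τ' :=
    (E h).permCongr.injective he
  apply Equiv.ext; intro x
  have := congrArg (fun e : Equiv.Perm (Fin (j+1) ⊕ Fin m) => e (Sum.inr x)) h2
  simpa using this

variable {j m n : ℕ}

lemma finRange_map_prod (f : Fin n → N) (g : ℕ → N) (hfg : ∀ i : Fin n, f i = g (i : ℕ)) :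
    ((List.finRange n).map f).prod = ((List.range n).map g).prod := by
  rw [← List.map_coe_finRange_eq_range, List.map_map]
  congr 1
  exact List.map_congr_left (fun i _ => hfg i)

lemma ent_shift (Hh : ℕ → N) (a i v : ℕ) : ent Hh (a + i) (a + v) = ent Hh i v := by
  unfold ent
  rcases le_or_gt i (v + 1) with hle | hlt
  · rw [if_pos (by omega), if_pos hle]
    congr 1; omega
  · rw [if_neg (by omega), if_neg (by omega)]

section
variable {Hh : ℕ → N}

lemma prod_emb (h0 : Hh 0 = 1) (h : j + 1 + m = n) (τ : Equiv.Perm (Fin m)) :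
    ((List.finRange n).map (fun (i : Fin n) => ent Hh (i : ℕ) ((emb h τ i : Fin n) : ℕ))).prod
      = Hh (j + 1) * ((List.finRange m).map (fun (i : Fin m) => ent Hh (i : ℕ) ((τ i : ℕ)))).prod := by
  have hg : ∀ i : Fin n, ent Hh (i : ℕ) ((emb h τ i : Fin n) : ℕ) =
      (fun i : ℕ => if hi : i < n then ent Hh i ((emb h τ ⟨i, hi⟩ : Fin n) : ℕ) else 0) (i : ℕ) := by
    intro i; simp only [dif_pos i.isLt, Fin.eta]
  have hgτ : ∀ i : Fin m, ent Hh (i : ℕ) ((τ i : ℕ)) =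
      (fun i : ℕ => if hi : i < m then ent Hh i ((τ ⟨i, hi⟩ : ℕ)) else 0) (i : ℕ) := by
    intro i; simp only [dif_pos i.isLt, Fin.eta]
  rw [finRange_map_prod _ (fun i : ℕ => if hi : i < n then ent Hh i ((emb h τ ⟨i, hi⟩ : Fin n) : ℕ) else 0) hg,
    finRange_map_prod _ (fun i : ℕ => if hi : i < m then ent Hh i ((τ ⟨i, hi⟩ : ℕ)) else 0) hgτ]
  set g : ℕ → N := fun i : ℕ => if hi : i < n then ent Hh i ((emb h τ ⟨i, hi⟩ : Fin n) : ℕ) else 0 with hgdef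
  subst h
  rw [List.range_add, List.map_append, List.prod_append, List.range_succ_eq_map,
    List.map_cons, List.prod_cons, List.map_map, List.map_map]
  have e0 : g 0 = Hh (j + 1) := by
    simp only [hgdef]
    rw [dif_pos (by omega : 0 < j + 1 + m)]
    rw [emb_val_zero _ _ _ rfl]
    simp [ent]
  have e1 : ((List.range j).map (g ∘ Nat.succ)).prod = 1 := by
    apply List.prod_eq_one
    intro x hx
    rw [List.mem_map] at hx
    obtain ⟨k, hk, rfl⟩ := hx
    rw [List.mem_range] at hk
    have hlt : k + 1 < j + 1 + m := by omega
    simp only [Function.comp_apply, hgdef, Nat.succ_eq_add_one, dif_pos hlt]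
    rw [emb_val_mid _ _ _ (by simp) (by simp; omega)]
    simp [ent, h0]
  have e2 : ((List.range m).map (g ∘ fun x => j + 1 + x)).prod
      = ((List.range m).map fun i : ℕ => if hi : i < m then ent Hh i ((τ ⟨i, hi⟩ : ℕ)) else 0).prod := by
    congr 1
    apply List.map_congr_left
    intro x hx
    rw [List.mem_range] at hx
    have hlt : j + 1 + x < j + 1 + m := by omega
    simp only [Function.comp_apply, hgdef, dif_pos hlt, dif_pos hx]
    rw [emb_val_high _ _ _ (by simp)]
    have harg : (⟨(((⟨j+1+x, hlt⟩ : Fin (j+1+m)) : ℕ)) - (j+1), by omega⟩ : Fin m) = ⟨x, hx⟩ := by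
      ext; simp
    rw [harg, ent_shift]
  rw [e0, e1, e2, mul_one]
end

section Surj
variable {Hh : ℕ → N}

lemma emb_surj (h : j + 1 + m = n) (σ : Equiv.Perm (Fin n))
    (hC : ∀ i : Fin n, (i : ℕ) ≤ (σ i : ℕ) + 1)
    (hz : (σ ⟨0, by omega⟩ : ℕ) = j) : ∃ τ, σ = emb h τ := by
  classical
  have npos : 0 < n := by omega
  set A : Finset (Fin n) := Finset.univ.filter (fun i => (i : ℕ) ≤ j) with hA
  have memA : ∀ i : Fin n, i ∈ A ↔ (i : ℕ) ≤ j := by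
    intro i; simp [hA]
  have hCinv : ∀ v : Fin n, ((σ.symm v : Fin n) : ℕ) ≤ (v : ℕ) + 1 := by
    intro v
    have := hC (σ.symm v)
    rwa [Equiv.apply_symm_apply] at this
  have hsub : A ⊆ A.image σ := by
    intro v hv
    rw [memA] at hv
    rcases eq_or_lt_of_le hv with hvj | hvj
    · refine Finset.mem_image.mpr ⟨⟨0, npos⟩, (memA _).mpr (by simp), ?_⟩
      exact Fin.ext (by rw [hz, hvj])
    · refine Finset.mem_image.mpr ⟨σ.symm v, (memA _).mpr ?_, Equiv.apply_symm_apply _ _⟩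
      have := hCinv v; omega
  have himg : A = A.image σ :=
    Finset.eq_of_subset_of_card_le hsub
      (le_of_eq (Finset.card_image_of_injective A σ.injective))
  have hmapA : ∀ i ∈ A, σ i ∈ A := fun i hi => himg ▸ Finset.mem_image_of_mem σ hi
  -- the model permutation
  set ρ : Equiv.Perm (Fin n) := emb h 1 with hρ
  have hρval : ∀ i ∈ A, ((ρ i : Fin n) : ℕ) = if (i : ℕ) = 0 then j else (i : ℕ) - 1 := by
    intro i hi
    rw [memA] at hi
    by_cases h0 : (i : ℕ) = 0
    · rw [if_pos h0, hρ]; exact emb_val_zero h 1 i h0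
    · rw [if_neg h0, hρ]; exact emb_val_mid h 1 i (by omega) hi
  have hρA : ∀ i ∈ A, ρ i ∈ A := by
    intro i hi
    have := hρval i hi
    rw [memA] at hi ⊢
    split at this <;> omega
  have himgρ : A.image ρ = A :=
    Finset.eq_of_subset_of_card_le
      (fun v hv => by
        obtain ⟨i, hi, rfl⟩ := Finset.mem_image.mp hv
        exact hρA i hi)
      (le_of_eq (Finset.card_image_of_injective A ρ.injective).symm)
  have S1 : ∑ i ∈ A, ((σ i : Fin n) : ℕ) = ∑ i ∈ A, (i : ℕ) := by
    rw [← Finset.sum_image (fun x _ y _ hxy => σ.injective hxy), ← himg]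
  have S2 : ∑ i ∈ A, ((ρ i : Fin n) : ℕ) = ∑ i ∈ A, (i : ℕ) := by
    rw [← Finset.sum_image (fun x _ y _ hxy => ρ.injective hxy), himgρ]
  have hpt : ∀ i ∈ A, ((ρ i : Fin n) : ℕ) ≤ ((σ i : Fin n) : ℕ) := by
    intro i hi
    have hv := hρval i hi
    by_cases h0 : (i : ℕ) = 0
    · have : i = ⟨0, npos⟩ := Fin.ext h0
      rw [if_pos h0] at hv
      rw [hv, this, hz]
    · rw [if_neg h0] at hv
      have := hC i; omega
  have key : ∀ i ∈ A, ((ρ i : Fin n) : ℕ) = ((σ i : Fin n) : ℕ) :=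
    (Finset.sum_eq_sum_iff_of_le hpt).mp (by rw [S1, S2])
  have hmid : ∀ i : Fin n, 1 ≤ (i : ℕ) → (i : ℕ) ≤ j → ((σ i : Fin n) : ℕ) = (i : ℕ) - 1 := by
    intro i h1 h2
    have hk := key i ((memA i).mpr h2)
    have hv := hρval i ((memA i).mpr h2)
    rw [if_neg (by omega)] at hv
    omega
  have hhigh : ∀ i : Fin n, j + 1 ≤ (i : ℕ) → j + 1 ≤ ((σ i : Fin n) : ℕ) := by
    intro i hi
    by_contra hcon
    have h1 : σ i ∈ A := (memA _).mpr (by omega)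
    rw [himg] at h1
    obtain ⟨i', hi', he⟩ := Finset.mem_image.mp h1
    have : i' = i := σ.injective he
    subst this
    rw [memA] at hi'
    omega
  have hsymm_high : ∀ v : Fin n, j + 1 ≤ (v : ℕ) → j + 1 ≤ ((σ.symm v : Fin n) : ℕ) := by
    intro v hv
    by_contra hcon
    have h1 : σ.symm v ∈ A := (memA _).mpr (by omega)
    have h2 := hmapA _ h1
    rw [Equiv.apply_symm_apply, memA] at h2
    omega
  -- construct τ
  refine ⟨{ toFun := fun x => ⟨((σ ⟨j + 1 + (x : ℕ), by omega⟩ : Fin n) : ℕ) - (j + 1), by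
              have h1 := hhigh ⟨j + 1 + (x : ℕ), by omega⟩ (by simp)
              have h2 := (σ ⟨j + 1 + (x : ℕ), by omega⟩).isLt
              omega⟩,
            invFun := fun x => ⟨((σ.symm ⟨j + 1 + (x : ℕ), by omega⟩ : Fin n) : ℕ) - (j + 1), by
              have h1 := hsymm_high ⟨j + 1 + (x : ℕ), by omega⟩ (by simp)
              have h2 := (σ.symm ⟨j + 1 + (x : ℕ), by omega⟩).isLt
              omega⟩,
            left_inv := ?_, right_inv := ?_ }, ?_⟩
  · intro x
    have h1 := hhigh ⟨j + 1 + (x : ℕ), by omega⟩ (by simp)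
    apply Fin.ext
    simp only
    have harg : (⟨j + 1 + (((σ ⟨j + 1 + (x : ℕ), by omega⟩ : Fin n) : ℕ) - (j + 1)), by omega⟩ : Fin n)
        = σ ⟨j + 1 + (x : ℕ), by omega⟩ := Fin.ext (by simp only; omega)
    rw [harg, Equiv.symm_apply_apply]
    simp
  · intro x
    have h1 := hsymm_high ⟨j + 1 + (x : ℕ), by omega⟩ (by simp)
    apply Fin.ext
    simp only
    have harg : (⟨j + 1 + (((σ.symm ⟨j + 1 + (x : ℕ), by omega⟩ : Fin n) : ℕ) - (j + 1)), by omega⟩ : Fin n)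
        = σ.symm ⟨j + 1 + (x : ℕ), by omega⟩ := Fin.ext (by simp only; omega)
    rw [harg, Equiv.apply_symm_apply]
    simp
  · apply Equiv.ext
    intro i
    apply Fin.ext
    by_cases h0 : (i : ℕ) = 0
    · rw [emb_val_zero h _ i h0]
      have : i = ⟨0, npos⟩ := Fin.ext h0
      rw [this, hz]
    · by_cases hij : (i : ℕ) ≤ j
      · rw [emb_val_mid h _ i (by omega) hij]
        exact hmid i (by omega) hij
      · rw [emb_val_high h _ i (by omega)]
        simp only [Equiv.coe_fn_mk]
        have harg : (⟨j + 1 + ((⟨(i : ℕ) - (j + 1), by omega⟩ : Fin m) : ℕ), by omega⟩ : Fin n) = i :=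
          Fin.ext (by simp only; omega)
        rw [harg]
        have := hhigh i (by omega)
        omega
end Surj

section Fiber
variable {Hh : ℕ → N}

lemma vanish (σ : Equiv.Perm (Fin n)) (hC : ¬ ∀ i : Fin n, (i : ℕ) ≤ (σ i : ℕ) + 1) :
    ((List.finRange n).map (fun (i : Fin n) => ent Hh (i : ℕ) ((σ i : ℕ)))).prod = 0 := by
  push_neg at hC
  obtain ⟨i, hi⟩ := hC
  apply List.prod_eq_zero
  rw [List.mem_map]
  exact ⟨i, List.mem_finRange i, by rw [ent, if_neg (by omega)]⟩

lemma fiber_sum (h0 : Hh 0 = 1) (h : j + 1 + m = n) :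
    (∑ σ ∈ Finset.univ.filter
        (fun σ : Equiv.Perm (Fin n) => ((σ ⟨0, by omega⟩ : Fin n) : ℕ) = j),
      ((Equiv.Perm.sign σ : ℤˣ) : ℤ) •
        ((List.finRange n).map (fun (i : Fin n) => ent Hh (i : ℕ) ((σ i : ℕ)))).prod)
    = ((-1 : ℤ) ^ j) • (Hh (j + 1) * D Hh m) := by
  classical
  have hTsub : Finset.image (emb h) Finset.univ ⊆ Finset.univ.filter
      (fun σ : Equiv.Perm (Fin n) => ((σ ⟨0, by omega⟩ : Fin n) : ℕ) = j) := by
    intro σ hσ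
    obtain ⟨τ, _, rfl⟩ := Finset.mem_image.mp hσ
    apply Finset.mem_filter.mpr
    exact ⟨Finset.mem_univ _, emb_val_zero h τ _ rfl⟩
  rw [← Finset.sum_subset hTsub]
  · rw [Finset.sum_image (fun x _ y _ hxy => emb_injective h hxy)]
    have hterm : ∀ τ : Equiv.Perm (Fin m),
        ((Equiv.Perm.sign (emb h τ) : ℤˣ) : ℤ) •
          ((List.finRange n).map (fun (i : Fin n) => ent Hh (i : ℕ) (((emb h τ) i : ℕ)))).prod
        = ((-1 : ℤ) ^ j) • (Hh (j + 1) *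
            (((Equiv.Perm.sign τ : ℤˣ) : ℤ) •
              ((List.finRange m).map (fun (i : Fin m) => ent Hh (i : ℕ) ((τ i : ℕ)))).prod)) := by
      intro τ
      rw [prod_emb h0 h τ, sign_emb h τ]
      push_cast
      rw [mul_smul, mul_smul_comm]
    rw [Finset.sum_congr rfl (fun τ _ => hterm τ), ← Finset.smul_sum, ← Finset.mul_sum, D_eq]
  · intro σ hσ hnT
    by_cases hC : ∀ i : Fin n, (i : ℕ) ≤ (σ i : ℕ) + 1
    · exfalso
      obtain ⟨τ, rfl⟩ := emb_surj h σ hC (Finset.mem_filter.mp hσ).2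
      exact hnT (Finset.mem_image_of_mem _ (Finset.mem_univ τ))
    · rw [vanish σ hC, smul_zero]

lemma D_rec (h0 : Hh 0 = 1) (n : ℕ) :
    D Hh (n + 1) = ∑ j : Fin (n + 1),
      ((-1 : ℤ) ^ (j : ℕ)) • (Hh ((j : ℕ) + 1) * D Hh (n - (j : ℕ))) := by
  classical
  rw [D_eq]
  rw [← Finset.sum_fiberwise Finset.univ
    (fun σ : Equiv.Perm (Fin (n + 1)) => σ ⟨0, Nat.succ_pos n⟩)]
  apply Finset.sum_congr rfl
  intro j _
  have h : (j : ℕ) + 1 + (n - (j : ℕ)) = n + 1 := by have := j.isLt; omega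
  have hfilter : Finset.univ.filter
      (fun σ : Equiv.Perm (Fin (n + 1)) => σ ⟨0, Nat.succ_pos n⟩ = j)
      = Finset.univ.filter
      (fun σ : Equiv.Perm (Fin (n + 1)) => ((σ ⟨0, by omega⟩ : Fin (n + 1)) : ℕ) = (j : ℕ)) := by
    apply Finset.filter_congr
    intro σ _
    simp [Fin.ext_iff]
  rw [hfilter, fiber_sum h0 h]
end Fiber

section RRec
variable (Hh : ℕ → N)

def phi (n : ℕ) : (Σ j : Fin (n + 1), Composition (n - (j : ℕ))) → Composition (n + 1) :=
  fun x => ⟨((x.1 : ℕ) + 1) :: x.2.blocks, by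
      intro i hi
      rcases List.mem_cons.mp hi with h | h
      · omega
      · exact x.2.blocks_pos h, by
      have hs := x.2.blocks_sum
      have hj := x.1.isLt
      simp only [List.sum_cons, hs]
      omega⟩

lemma phi_bij (n : ℕ) : Function.Bijective (phi n) := by
  constructor
  · rintro ⟨⟨j, hj⟩, β⟩ ⟨⟨j', hj'⟩, β'⟩ he
    have hb : ((j : ℕ) + 1) :: β.blocks = ((j' : ℕ) + 1) :: β'.blocks :=
      congrArg Composition.blocks he
    have h1 : j = j' := by
      have := List.head_eq_of_cons_eq hb; omega
    subst h1
    have h2 : β.blocks = β'.blocks := List.tail_eq_of_cons_eq hb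
    have h3 : β = β' := Composition.ext h2
    rw [h3]
  · intro α
    have hne : α.blocks ≠ [] := by
      intro he
      have := α.blocks_sum
      rw [he] at this
      simp at this
    rcases hb : α.blocks with _ | ⟨b, l⟩
    · exact absurd hb hne
    have hbpos : 0 < b := α.blocks_pos (hb ▸ List.mem_cons_self (a := b) (l := l))
    have hsum : b + l.sum = n + 1 := by
      have := α.blocks_sum
      rw [hb, List.sum_cons] at this
      exact this
    refine ⟨⟨⟨b - 1, by omega⟩, ⟨l, fun hi => α.blocks_pos (hb ▸ List.mem_cons_of_mem _ hi), by
      simp only; omega⟩⟩, ?_⟩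
    apply Composition.ext
    show (((b - 1) + 1) :: l) = α.blocks
    rw [hb]
    congr 1
    omega

lemma R_rec (n : ℕ) :
    R Hh (n + 1) = ∑ j : Fin (n + 1),
      ((-1 : ℤ) ^ (j : ℕ)) • (Hh ((j : ℕ) + 1) * R Hh (n - (j : ℕ))) := by
  rw [R, ← Fintype.sum_bijective (phi n) (phi_bij n)
    (fun x => ((-1 : ℤ) ^ ((n+1) + (phi n x).length)) • ((phi n x).blocks.map Hh).prod)
    _ (fun x => rfl)]
  rw [← Finset.univ_sigma_univ, Finset.sum_sigma]
  apply Finset.sum_congr rfl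
  intro j _
  rw [R, Finset.mul_sum, Finset.smul_sum]
  apply Finset.sum_congr rfl
  intro β _
  have hlen : (phi n ⟨j, β⟩).length = β.length + 1 := by
    simp [phi, Composition.length]
  have hblocks : (phi n ⟨j, β⟩).blocks = ((j : ℕ) + 1) :: β.blocks := rfl
  rw [hlen, hblocks, List.map_cons, List.prod_cons]
  rw [mul_smul_comm, smul_smul]
  congr 1
  rw [← pow_add]
  have he : (n + 1) + (β.length + 1) = ((j : ℕ) + ((n - (j : ℕ)) + β.length)) + 2 := by
    have := j.isLt; omega
  rw [he, pow_add]
  norm_num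

end RRec

section Base
variable (Hh : ℕ → N)

lemma D_zero : D Hh 0 = 1 := by
  rw [D]
  rw [Fintype.sum_subsingleton _ (1 : Equiv.Perm (Fin 0))]
  simp

lemma R_zero : R Hh 0 = 1 := by
  rw [R]
  have hval : ∀ α : Composition 0,
      ((-1 : ℤ) ^ ((0 : ℕ) + α.length)) • (α.blocks.map Hh).prod = 1 := by
    intro α
    have hnil : α.blocks = [] := by
      rcases hb : α.blocks with _ | ⟨b, l⟩
      · rfl
      · have hbpos : 0 < b := α.blocks_pos (hb ▸ List.mem_cons_self (a := b) (l := l))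
        have := α.blocks_sum
        rw [hb, List.sum_cons] at this
        omega
    have hlen : α.length = 0 := by
      rw [Composition.length, hnil]; rfl
    rw [hnil, hlen]
    simp
  rw [Finset.sum_congr rfl (fun α _ => hval α), Finset.sum_const]
  rw [Finset.card_univ, composition_card]
  simp

end Base

lemma main (Hh : ℕ → N) (h0 : Hh 0 = 1) (n : ℕ) : D Hh n = R Hh n := by
  induction n using Nat.strong_induction_on with
  | _ n ih =>
    match n, ih with
    | 0, _ => rw [D_zero, R_zero]
    | (k + 1), ih =>
      rw [D_rec h0, R_rec]
      apply Finset.sum_congr rfl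
      intro j _
      rw [ih (k - (j : ℕ)) (by omega)]

end Det12



/-- the noncommutative determinant `Det(H_{j-i+1})_{1≤i,j≤n}`
(with factors in row order, `H_0 = 1`, `H_m = 0` for `m < 0`) expands as
`∑_{α ⊨ n} (-1)^{n + l(α)} H_α`: its nonzero products are in sign-preserving
bijection with compositions of `n`.  This is an identity valid for any ring `N`
and any `H : ℕ → N` with `H 0 = 1`. -/
theorem det_one_column_expansion (N : Type) [Ring N] (Hh : ℕ → N)
    (h0 : Hh 0 = 1) (n : ℕ) :
    (∑ σ : Equiv.Perm (Fin n), ((Equiv.Perm.sign σ : ℤˣ) : ℤ) •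
      ((List.finRange n).map (fun (i : Fin n) =>
        if (i : ℕ) ≤ (σ i : ℕ) + 1 then Hh ((σ i : ℕ) + 1 - (i : ℕ)) else 0)).prod) =
    ∑ α : Composition n, ((-1 : ℤ) ^ (n + α.length)) • (α.blocks.map Hh).prod := by
  exact Det12.main Hh h0 n
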